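/- Let F be a free group of rank d ≥ 2 and let S be a finite symmetric generating set of F, with word metric d_S. Then no metric functional in the metric-functional boundary ∂(F,d_S) has a finite orbit under the F-action: for every h ∈ ∂(F,d_S), the set {x.h : x ∈ F} is infinite. -/

import Mathlib

open Filter Topology

section Defs

variable {G : Type*}

/-- `d` is a metric on `X` (nonnegative, vanishing exactly on the diagonal,
symmetric, triangle inequality). -/
def IsMetric {X : Type*} (d : X → X → ℝ) : Prop :=
  (∀ x y, 0 ≤ d x y) ∧ (∀ x y, d x y = 0 ↔ x = y) ∧ (∀ x y, d x y = d y x) ∧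
    (∀ x y z, d x z ≤ d x y + d y z)

/-- The Busemann function of `x` with base point `1`: `b_x(y) = d(x,y) - d(x,1)`. -/
def bus [Group G] (d : G → G → ℝ) (x y : G) : ℝ := d x y - d x 1

/-- `h` belongs to the metric-functional boundary `∂(G,d)`: it is a pointwise
limit of Busemann functions and is not itself a Busemann function. -/
def InBoundary [Group G] (d : G → G → ℝ) (h : G → ℝ) : Prop :=
  (∃ u : ℕ → G, ∀ y : G, Tendsto (fun n => bus d (u n) y) atTop (𝓝 (h y))) ∧
    ∀ x : G, h ≠ bus d x

/-- The action of `x ∈ G` on functions: `(x.h)(y) = h(x⁻¹y) - h(x⁻¹)`. -/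
def act [Group G] (x : G) (h : G → ℝ) : G → ℝ := fun y => h (x⁻¹ * y) - h x⁻¹

/-- `S` is a finite symmetric generating set of `G`. -/
def FinSymGen [Group G] (S : Set G) : Prop :=
  S.Finite ∧ (∀ s ∈ S, s⁻¹ ∈ S) ∧ Subgroup.closure S = ⊤

/-- The word length of `x` with respect to `S`: the least `n` such that `x`
is a product of `n` elements of `S`. -/
noncomputable def wordLength [Group G] (S : Set G) (x : G) : ℕ :=
  sInf {n : ℕ | ∃ l : List G, (∀ s ∈ l, s ∈ S) ∧ l.length = n ∧ l.prod = x}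

/-- The word metric with respect to `S` : `d_S(x,y) = |x⁻¹y|_S`. -/
noncomputable def wordDist [Group G] (S : Set G) (x y : G) : ℝ :=
  (wordLength S (x⁻¹ * y) : ℝ)

/-- `(G,d)` is quasi-isometric to a Cayley graph of `G`. -/
def QIToCayley [Group G] (d : G → G → ℝ) : Prop :=
  ∃ S : Set G, FinSymGen S ∧ ∃ φ : G → G, ∃ C : ℝ, 0 < C ∧
    (∀ y : G, ∃ x : G, wordDist S (φ x) y ≤ C) ∧
    ∀ x y : G, C⁻¹ * d x y - C ≤ wordDist S (φ x) (φ y) ∧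
      wordDist S (φ x) (φ y) ≤ C * d x y + C

/-- A Banach metric on `G`: an integer-valued, left-invariant, proper metric,
quasi-isometric to a Cayley graph, all of whose metric functionals are unbounded. -/
def IsBanachMetric [Group G] (d : G → G → ℝ) : Prop :=
  IsMetric d ∧
  (∀ x y : G, ∃ n : ℕ, d x y = n) ∧
  (∀ x y z : G, d (z * x) (z * y) = d x y) ∧
  (∀ r : ℝ, {x : G | d x 1 ≤ r}.Finite) ∧
  QIToCayley d ∧
  ∀ h : G → ℝ, InBoundary d h → ¬ ∃ B : ℝ, ∀ x : G, |h x| ≤ B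

/-- A virtual homomorphism on `G`: a function `φ : G → ℤ` restricting to a
nontrivial homomorphism on some finite index subgroup. -/
def IsVirtualHom [Group G] (φ : G → ℤ) : Prop :=
  ∃ H : Subgroup G, H.FiniteIndex ∧
    (∀ a b : G, a ∈ H → b ∈ H → φ (a * b) = φ a + φ b) ∧
    ∃ a ∈ H, φ a ≠ 0

end Defs

section WL

variable {G : Type*} [Group G] {S : Set G}

lemma wordLength_exists (hS : FinSymGen S) (x : G) :
    ∃ l : List G, (∀ s ∈ l, s ∈ S) ∧ l.length = wordLength S x ∧ l.prod = x := by
  have hx : x ∈ Subgroup.closure S := hS.2.2 ▸ Subgroup.mem_top x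
  have hx' : x ∈ Submonoid.closure (S ∪ S⁻¹) := by
    rw [← Subgroup.closure_toSubmonoid] at *; exact hx
  obtain ⟨l, hl, hlp⟩ := Submonoid.exists_list_of_mem_closure hx'
  have hl' : ∀ s ∈ l, s ∈ S := by
    intro s hs
    rcases hl s hs with hmem | hmem
    · exact hmem
    · have := hS.2.1 _ (Set.mem_inv.mp hmem)
      simpa using this
  have : l.length ∈ {n : ℕ | ∃ l : List G, (∀ s ∈ l, s ∈ S) ∧ l.length = n ∧ l.prod = x} :=
    ⟨l, hl', rfl, hlp⟩
  exact Nat.sInf_mem ⟨l.length, this⟩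

lemma wordLength_le {x : G} {l : List G} (hl : ∀ s ∈ l, s ∈ S) (hp : l.prod = x) :
    wordLength S x ≤ l.length :=
  Nat.sInf_le ⟨l, hl, rfl, hp⟩

lemma wordLength_one : wordLength S (1 : G) = 0 :=
  Nat.le_zero.mp (wordLength_le (by simp) (List.prod_nil))

lemma wordLength_mul_le (hS : FinSymGen S) (x y : G) :
    wordLength S (x * y) ≤ wordLength S x + wordLength S y := by
  obtain ⟨l₁, h₁, hlen₁, hp₁⟩ := wordLength_exists hS x
  obtain ⟨l₂, h₂, hlen₂, hp₂⟩ := wordLength_exists hS y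
  have := wordLength_le (S := S) (x := x * y) (l := l₁ ++ l₂)
    (by intro s hs; rcases List.mem_append.mp hs with h | h; exacts [h₁ s h, h₂ s h])
    (by rw [List.prod_append, hp₁, hp₂])
  simpa [hlen₁, hlen₂] using this

lemma wordLength_inv_le (hS : FinSymGen S) (x : G) :
    wordLength S x⁻¹ ≤ wordLength S x := by
  obtain ⟨l, h₁, hlen, hp⟩ := wordLength_exists hS x
  have hmem : ∀ s ∈ (l.map (fun t => t⁻¹)).reverse, s ∈ S := by
    intro s hs
    rw [List.mem_reverse, List.mem_map] at hs
    obtain ⟨t, ht, rfl⟩ := hs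
    exact hS.2.1 _ (h₁ t ht)
  have hprod : ((l.map (fun t => t⁻¹)).reverse).prod = x⁻¹ := by
    rw [← hp, ← List.prod_inv_reverse]
  have := wordLength_le hmem hprod
  simpa [hlen] using this

lemma wordLength_inv (hS : FinSymGen S) (x : G) :
    wordLength S x⁻¹ = wordLength S x :=
  le_antisymm (wordLength_inv_le hS x)
    (by simpa using wordLength_inv_le hS x⁻¹)

lemma wordLength_eq_zero (hS : FinSymGen S) {x : G} (hx : wordLength S x = 0) : x = 1 := by
  obtain ⟨l, _, hlen, hp⟩ := wordLength_exists hS x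
  rw [hx, List.length_eq_zero_iff] at hlen
  rw [hlen] at hp; simpa using hp.symm

lemma wordLength_ball_finite (hS : FinSymGen S) (n : ℕ) :
    {x : G | wordLength S x ≤ n}.Finite := by
  induction n with
  | zero =>
    apply Set.Finite.subset (Set.finite_singleton (1 : G))
    intro x hx
    simp only [Set.mem_setOf_eq, Nat.le_zero] at hx
    simp [wordLength_eq_zero hS hx]
  | succ n ih =>
    apply Set.Finite.subset ((ih.union (Set.Finite.image2 (fun a b => a * b) ih hS.1)))
    intro x hx
    simp only [Set.mem_setOf_eq] at hx
    obtain ⟨l, hmem, hlen, hp⟩ := wordLength_exists hS x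
    rcases Nat.lt_or_ge (wordLength S x) (n+1) with hlt | hge
    · exact Or.inl (Nat.lt_succ_iff.mp hlt)
    · right
      have hxlen : l.length = n + 1 := le_antisymm (hlen.symm ▸ hx) (hlen ▸ hge)
      have hlne : l ≠ [] := by intro hc; rw [hc] at hxlen; simp at hxlen
      refine ⟨l.dropLast.prod, ?_, l.getLast hlne, hmem _ (List.getLast_mem hlne), ?_⟩
      · have : l.dropLast.length = n := by
          rw [List.length_dropLast, hxlen]; rfl
        exact this ▸ wordLength_le (fun s hs => hmem s (List.dropLast_sublist l |>.mem hs)) rfl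
      · show l.dropLast.prod * l.getLast hlne = x
        rw [← hp]
        conv_rhs => rw [← List.dropLast_append_getLast hlne]
        rw [List.prod_append, List.prod_singleton]

end WL

section Analytic

variable {G : Type*} [Group G] {S : Set G} {h : G → ℝ} {u : ℕ → G}

lemma bus_wordDist (x y : G) :
    bus (wordDist S) x y = (wordLength S (x⁻¹ * y) : ℝ) - (wordLength S x⁻¹ : ℝ) := by
  simp [bus, wordDist]

lemma bus_le (hS : FinSymGen S) (x y : G) :
    bus (wordDist S) x y ≤ (wordLength S y : ℝ) := by
  rw [bus_wordDist]
  have := wordLength_mul_le hS x⁻¹ y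
  have h2 : (wordLength S (x⁻¹ * y) : ℝ) ≤ (wordLength S x⁻¹ : ℝ) + (wordLength S y : ℝ) := by
    exact_mod_cast this
  linarith

lemma bus_ge (hS : FinSymGen S) (x y : G) :
    -(wordLength S y : ℝ) ≤ bus (wordDist S) x y := by
  rw [bus_wordDist]
  have h1 : wordLength S x⁻¹ ≤ wordLength S (x⁻¹ * y) + wordLength S y := by
    have h0 := wordLength_mul_le hS (x⁻¹ * y) y⁻¹
    rw [mul_assoc, mul_inv_cancel, mul_one] at h0
    rw [wordLength_inv hS y] at h0
    exact h0
  have h2 : (wordLength S x⁻¹ : ℝ) ≤ (wordLength S (x⁻¹ * y) : ℝ) + (wordLength S y : ℝ) := by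
    exact_mod_cast h1
  linarith

variable (hu : ∀ y, Filter.Tendsto (fun n => bus (wordDist S) (u n) y) Filter.atTop (𝓝 (h y)))

include hu

lemma h_one : h 1 = 0 := by
  have hz : ∀ n, bus (wordDist S) (u n) 1 = 0 := by intro n; simp [bus]
  have h1 : Filter.Tendsto (fun n => bus (wordDist S) (u n) 1) Filter.atTop (𝓝 (0:ℝ)) := by
    simp only [hz]; exact tendsto_const_nhds
  exact tendsto_nhds_unique (hu 1) h1

lemma h_le (hS : FinSymGen S) (y : G) : h y ≤ (wordLength S y : ℝ) :=
  le_of_tendsto (hu y) (Filter.Eventually.of_forall fun n => bus_le hS (u n) y)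

lemma h_ge (hS : FinSymGen S) (y : G) : -(wordLength S y : ℝ) ≤ h y :=
  ge_of_tendsto (hu y) (Filter.Eventually.of_forall fun n => bus_ge hS (u n) y)

lemma h_eq_of_infinite_eq {c : ℝ} {y : G} {A : Set ℕ}
    (hA : A.Infinite) (hc : ∀ n ∈ A, bus (wordDist S) (u n) y = c) : h y = c := by
  refine tendsto_nhds_unique_of_frequently_eq (hu y) tendsto_const_nhds ?_
  rw [Nat.frequently_atTop_iff_infinite]
  exact hA.mono fun n hn => hc n hn

omit hu

lemma pigeon {α β : Type*} {A : Set α} (hA : A.Infinite) {f : α → β} {B : Set β}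
    (hB : B.Finite) (hf : ∀ n ∈ A, f n ∈ B) :
    ∃ y ∈ B, {n | n ∈ A ∧ f n = y}.Infinite := by
  by_contra hc
  push_neg at hc
  have : A ⊆ ⋃ y ∈ B, {n | n ∈ A ∧ f n = y} := by
    intro n hn
    exact Set.mem_biUnion (hf n hn) ⟨hn, rfl⟩
  exact hA (Set.Finite.subset (Set.Finite.biUnion hB (fun y hy =>
    hc y hy)) this)

include hu

lemma u_escapes (hS : FinSymGen S) (hnb : ∀ x : G, h ≠ bus (wordDist S) x) (m : ℕ) :
    {n : ℕ | wordLength S (u n) ≤ m}.Finite := by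
  by_contra hc
  have hinf : {n : ℕ | wordLength S (u n) ≤ m}.Infinite := hc
  obtain ⟨x, _, hx⟩ := pigeon hinf (wordLength_ball_finite hS m) (fun n hn => hn)
  refine hnb x (funext fun y => ?_)
  exact h_eq_of_infinite_eq hu hx (fun n hn => by rw [hn.2])

lemma calibrated (hS : FinSymGen S) (hnb : ∀ x : G, h ≠ bus (wordDist S) x) (k : ℕ) :
    ∃ y : G, wordLength S y = k ∧ h y = -(k : ℝ) := by
  classical
  set A : Set ℕ := {n | k ≤ wordLength S (u n)} with hA
  have hAinf : A.Infinite := by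
    have hfin : {n : ℕ | wordLength S (u n) < k}.Finite :=
      (u_escapes hu hS hnb k).subset (fun n hn => Set.mem_setOf_eq ▸ le_of_lt hn)
    have := hfin.infinite_compl (α := ℕ)
    apply this.mono
    intro n hn
    simp only [Set.mem_compl_iff, Set.mem_setOf_eq, not_lt] at hn ⊢
    exact hn
  have hex : ∀ n ∈ A, ∃ y : G, wordLength S y ≤ k ∧ bus (wordDist S) (u n) y = -(k : ℝ) := by
    intro n hn
    simp only [hA, Set.mem_setOf_eq] at hn
    obtain ⟨l, hmem, hlen, hp⟩ := wordLength_exists hS (u n)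
    refine ⟨(l.take k).prod, ?_, ?_⟩
    · calc wordLength S (l.take k).prod ≤ (l.take k).length :=
            wordLength_le (fun s hs => hmem s ((List.take_sublist k l).mem hs)) rfl
        _ ≤ k := by simp
    · have hd : ((l.take k).prod)⁻¹ * u n = (l.drop k).prod := by
        rw [← hp]
        have : (List.take k l).prod * (List.drop k l).prod = l.prod := by
          rw [← List.prod_append, List.take_append_drop]
        rw [← this]
        group
      have h1 : wordLength S (((l.take k).prod)⁻¹ * u n) ≤ l.length - k :=
        le_trans (hd ▸ wordLength_le (fun s hs => hmem s ((List.drop_sublist k l).mem hs)) rfl)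
          (by simp)
      have hkl : k ≤ l.length := by omega
      have h2 : wordLength S ((u n)⁻¹ * (l.take k).prod) + k ≤ wordLength S (u n) := by
        have : wordLength S ((u n)⁻¹ * (l.take k).prod) =
            wordLength S (((l.take k).prod)⁻¹ * u n) := by
          rw [← wordLength_inv hS (((l.take k).prod)⁻¹ * u n)]
          congr 1
          group
        omega
      have h3 : -(wordLength S ((l.take k).prod) : ℝ) ≤ bus (wordDist S) (u n) ((l.take k).prod) :=
        bus_ge hS _ _
      have h4 : bus (wordDist S) (u n) ((l.take k).prod) ≤ -(k : ℝ) := by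
        rw [bus_wordDist, wordLength_inv hS]
        have := (Nat.cast_le (α := ℝ)).mpr h2
        push_cast at this ⊢
        linarith
      have h5 : wordLength S ((l.take k).prod) ≤ k := by
        calc wordLength S (l.take k).prod ≤ (l.take k).length :=
              wordLength_le (fun s hs => hmem s ((List.take_sublist k l).mem hs)) rfl
          _ ≤ k := by simp
      have h6 : -(k : ℝ) ≤ bus (wordDist S) (u n) ((l.take k).prod) := by
        refine le_trans ?_ h3
        simp only [neg_le_neg_iff]
        exact_mod_cast h5
      linarith [le_antisymm h4 h6]
  set f : ℕ → G := fun n => if hn : n ∈ A then (hex n hn).choose else 1 with hf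
  have hfball : ∀ n ∈ A, f n ∈ {x : G | wordLength S x ≤ k} := by
    intro n hn
    simp only [hf, dif_pos hn]
    exact (hex n hn).choose_spec.1
  obtain ⟨y, hyball, hyinf⟩ := pigeon hAinf (wordLength_ball_finite hS k) hfball
  have hbus : ∀ n ∈ {n | n ∈ A ∧ f n = y}, bus (wordDist S) (u n) y = -(k : ℝ) := by
    rintro n ⟨hn, hfn⟩
    have := (hex n hn).choose_spec.2
    rw [show (hex n hn).choose = f n by simp [hf, dif_pos hn], hfn] at this
    exact this
  have hy : h y = -(k : ℝ) := h_eq_of_infinite_eq hu hyinf hbus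
  refine ⟨y, ?_, hy⟩
  have h1 : -(wordLength S y : ℝ) ≤ h y := h_ge hu hS y
  rw [hy] at h1
  have h2 : (k : ℝ) ≤ (wordLength S y : ℝ) := by linarith
  have h3 : k ≤ wordLength S y := by exact_mod_cast h2
  exact le_antisymm hyball h3

end Analytic
section Tree

open FreeGroup

variable {α : Type*} [DecidableEq α]

/-- no-cancellation relation on adjacent letters -/
def NC (a b : α × Bool) : Prop := ¬(a.1 = b.1 ∧ a.2 = !b.2)

lemma reduce_eq_self_of_chain : ∀ {L : List (α × Bool)}, List.Chain' NC L → reduce L = L := by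
  intro L
  induction L with
  | nil => intro _; rfl
  | cons x L ih =>
    intro hc
    have htail := hc.tail
    rw [reduce.cons, ih htail]
    cases L with
    | nil => rfl
    | cons y t =>
      have hxy : NC x y := List.isChain_cons_cons.mp hc |>.1
      simp only [NC] at hxy
      show (if x.1 = y.1 ∧ x.2 = !y.2 then t else x :: y :: t) = x :: y :: t
      rw [if_neg hxy]

lemma chain_reduce : ∀ (L : List (α × Bool)), List.Chain' NC (reduce L) := by
  intro L
  induction L with
  | nil => exact List.isChain_nil
  | cons x L ih =>
    rw [reduce.cons]
    rcases hr : reduce L with _ | ⟨y, t⟩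
    · exact List.isChain_singleton _
    · rw [hr] at ih
      by_cases hc : x.1 = y.1 ∧ x.2 = !y.2
      · simp only [if_pos hc]; exact ih.tail
      · simp only [if_neg hc]
        exact List.isChain_cons_cons.mpr ⟨hc, ih⟩

lemma chain_toWord (x : FreeGroup α) : List.Chain' NC (toWord x) := by
  rw [← reduce_toWord]; exact chain_reduce _

lemma norm_def (x : FreeGroup α) : norm x = x.toWord.length := rfl

/-- splitting along a prefix of the reduced word -/
lemma prefix_split {x : FreeGroup α} {w₁ w₂ : List (α × Bool)} (hw : x.toWord = w₁ ++ w₂) :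
    (mk w₁).toWord = w₁ ∧ (mk w₂).toWord = w₂ ∧ (mk w₁)⁻¹ * x = mk w₂ ∧
      norm (mk w₁) = w₁.length ∧ norm ((mk w₁)⁻¹ * x) = w₂.length ∧
      norm x = w₁.length + w₂.length := by
  have hch : List.Chain' NC (w₁ ++ w₂) := hw ▸ chain_toWord x
  have h1 : (mk w₁).toWord = w₁ := by
    rw [toWord_mk]; exact reduce_eq_self_of_chain (hch.prefix ⟨w₂, rfl⟩)
  have h2 : (mk w₂).toWord = w₂ := by
    rw [toWord_mk]; exact reduce_eq_self_of_chain (hch.suffix ⟨w₁, rfl⟩)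
  have hx : x = mk w₁ * mk w₂ := by
    rw [mul_mk, ← hw, mk_toWord]
  have h3 : (mk w₁)⁻¹ * x = mk w₂ := by rw [hx]; group
  refine ⟨h1, h2, h3, by rw [norm_def, h1], by rw [h3, norm_def, h2], ?_⟩
  rw [norm_def, hw, List.length_append]

/-- separation: if `p⁻¹v` starts with letter `c` and `p⁻¹v'` does not,
then any path from `v` to `v'` is at least as long as from `p` to `v'`. -/
lemma tree_sep {p v v' : FreeGroup α} {c : α × Bool}
    (hv : (toWord (p⁻¹ * v)).head? = some c)
    (hv' : (toWord (p⁻¹ * v')).head? ≠ some c) :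
    norm (p⁻¹ * v') ≤ norm (v⁻¹ * v') := by
  rcases hBc : toWord (p⁻¹ * v') with _ | ⟨b, t⟩
  · have hz : norm (p⁻¹ * v') = 0 := by rw [norm_def, hBc]; rfl
    simp [hz]
  have hbc : b ≠ c := by intro hbc; apply hv'; rw [hBc, hbc]; rfl
  have hvv' : v⁻¹ * v' = mk (invRev (toWord (p⁻¹ * v)) ++ toWord (p⁻¹ * v')) := by
    have h0 : v⁻¹ * v' = (p⁻¹ * v)⁻¹ * (p⁻¹ * v') := by group
    rw [h0]
    conv_lhs => rw [← mk_toWord (x := p⁻¹ * v), ← mk_toWord (x := p⁻¹ * v')]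
    rw [inv_mk, mul_mk]
  have hred : reduce (invRev (toWord (p⁻¹ * v)) ++ toWord (p⁻¹ * v')) =
      invRev (toWord (p⁻¹ * v)) ++ toWord (p⁻¹ * v') := by
    apply reduce_eq_self_of_chain
    refine List.isChain_append.mpr ?_
    refine ⟨?_, chain_toWord _, ?_⟩
    · have h1 : invRev (toWord (p⁻¹ * v)) = toWord ((p⁻¹ * v)⁻¹) := (toWord_inv _).symm
      rw [h1]; exact chain_toWord _
    · intro a ha b' hb'
      have hlast : (invRev (toWord (p⁻¹ * v))).getLast? = some (c.1, !c.2) := by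
        rw [invRev, List.getLast?_reverse, List.head?_map, hv]; rfl
      rw [hlast, Option.mem_some_iff] at ha
      subst ha
      have hb0 : b = b' := by rw [hBc] at hb'; simpa using hb'
      rintro ⟨h1, h2⟩
      simp only at h1 h2
      rw [← hb0] at h1 h2
      have h3 : c.2 = b.2 := by
        have h4 := congrArg (fun x => !x) h2
        simpa using h4
      exact hbc (Prod.ext h1.symm h3.symm)
  have hnorm : norm (v⁻¹ * v') =
      (invRev (toWord (p⁻¹ * v))).length + (toWord (p⁻¹ * v')).length := by
    rw [hvv', norm_def, toWord_mk, hred, List.length_append]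
  have h4 : norm (p⁻¹ * v') = (toWord (p⁻¹ * v')).length := norm_def _
  omega

end Tree
section ComPre

variable {β : Type*} [DecidableEq β]

def comPre : List β → List β → List β
  | a :: l, b :: m => if a = b then a :: comPre l m else []
  | _, _ => []

lemma comPre_nil_left (m : List β) : comPre [] m = [] := by cases m <;> rfl

lemma comPre_prefix_left : ∀ (l m : List β), comPre l m <+: l := by
  intro l
  induction l with
  | nil => intro m; rw [comPre_nil_left]
  | cons a l ih =>
    intro m
    cases m with
    | nil => exact List.nil_prefix
    | cons b m =>
      by_cases hab : a = b
      · show (if a = b then a :: comPre l m else []) <+: a :: l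
        rw [if_pos hab]
        exact ⟨(ih m).choose, by rw [List.cons_append, (ih m).choose_spec]⟩
      · show (if a = b then a :: comPre l m else []) <+: a :: l
        rw [if_neg hab]
        exact List.nil_prefix

lemma comPre_prefix_right : ∀ (l m : List β), comPre l m <+: m := by
  intro l
  induction l with
  | nil => intro m; rw [comPre_nil_left]; exact List.nil_prefix
  | cons a l ih =>
    intro m
    cases m with
    | nil => exact List.prefix_refl _
    | cons b m =>
      by_cases hab : a = b
      · show (if a = b then a :: comPre l m else []) <+: b :: m
        rw [if_pos hab, hab]
        exact ⟨(ih m).choose, by rw [List.cons_append, (ih m).choose_spec]⟩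
      · show (if a = b then a :: comPre l m else []) <+: b :: m
        rw [if_neg hab]
        exact List.nil_prefix

lemma comPre_spec : ∀ (l m : List β), ∃ l' m',
    l = comPre l m ++ l' ∧ m = comPre l m ++ m' ∧
    ∀ x, l'.head? = some x → m'.head? ≠ some x := by
  intro l
  induction l with
  | nil =>
    intro m
    exact ⟨[], m, by rw [comPre_nil_left]; rfl, by rw [comPre_nil_left]; rfl,
      by intro x hx; simp at hx⟩
  | cons a l ih =>
    intro m
    cases m with
    | nil =>
      refine ⟨a :: l, [], rfl, rfl, ?_⟩
      intro x _ hx; simp at hx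
    | cons b m =>
      by_cases hab : a = b
      · obtain ⟨l', m', hl, hm, hmax⟩ := ih m
        refine ⟨l', m', ?_, ?_, hmax⟩
        · show a :: l = (if a = b then a :: comPre l m else []) ++ l'
          rw [if_pos hab, List.cons_append, ← hl]
        · show b :: m = (if a = b then a :: comPre l m else []) ++ m'
          rw [if_pos hab, List.cons_append, ← hm, hab]
      · refine ⟨a :: l, b :: m, ?_, ?_, ?_⟩
        · show a :: l = (if a = b then a :: comPre l m else []) ++ (a :: l)
          rw [if_neg hab]; rfl
        · show b :: m = (if a = b then a :: comPre l m else []) ++ (b :: m)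
          rw [if_neg hab]; rfl
        · intro x hx hy
          simp only [List.head?_cons, Option.some.injEq] at hx hy
          exact hab (hx ▸ hy ▸ rfl)

end ComPre

section BiLip

open FreeGroup

variable {α : Type*} [DecidableEq α] {S : Set (FreeGroup α)}

lemma single_letter_wl {L : ℕ} (hS : FinSymGen S)
    (hL2 : ∀ a : α, wordLength S (FreeGroup.of a) ≤ L) (e : α × Bool) :
    wordLength S (mk [e]) ≤ L := by
  rcases e with ⟨a, b⟩
  cases b
  · have hinv : mk [(a, false)] = (FreeGroup.of a)⁻¹ := by
      show mk [(a, false)] = (mk [(a, true)])⁻¹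
      rw [inv_mk]; congr 1
    rw [hinv, wordLength_inv hS]
    exact hL2 a
  · exact hL2 a

lemma wl_le_norm {L : ℕ} (hS : FinSymGen S)
    (hL2 : ∀ a : α, wordLength S (FreeGroup.of a) ≤ L) (x : FreeGroup α) :
    wordLength S x ≤ L * norm x := by
  have key : ∀ w : List (α × Bool), wordLength S (mk w) ≤ L * w.length := by
    intro w
    induction w with
    | nil => simpa [← FreeGroup.one_eq_mk] using wordLength_one.le
    | cons e w ih =>
      have : mk (e :: w) = mk [e] * mk w := by rw [mul_mk]; rfl
      rw [this]
      calc wordLength S (mk [e] * mk w) ≤ wordLength S (mk [e]) + wordLength S (mk w) :=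
            wordLength_mul_le hS _ _
        _ ≤ L + L * w.length := add_le_add (single_letter_wl hS hL2 e) ih
        _ = L * (e :: w).length := by rw [List.length_cons]; ring
  calc wordLength S x = wordLength S (mk x.toWord) := by rw [mk_toWord]
    _ ≤ L * x.toWord.length := key _
    _ = L * norm x := by rw [norm_def]

lemma norm_le_wl {L : ℕ} (hS : FinSymGen S)
    (hL1 : ∀ s ∈ S, norm s ≤ L) (x : FreeGroup α) :
    norm x ≤ L * wordLength S x := by
  obtain ⟨l, hmem, hlen, hp⟩ := wordLength_exists hS x
  have key : ∀ w : List (FreeGroup α), (∀ s ∈ w, s ∈ S) → norm w.prod ≤ L * w.length := by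
    intro w
    induction w with
    | nil => intro _; simp
    | cons s w ih =>
      intro hw
      calc norm (s :: w).prod = norm (s * w.prod) := by rw [List.prod_cons]
        _ ≤ norm s + norm w.prod := norm_mul_le _ _
        _ ≤ L + L * w.length := add_le_add (hL1 s (hw s List.mem_cons_self))
            (ih (fun t ht => hw t (List.mem_cons_of_mem s ht)))
        _ = L * (s :: w).length := by rw [List.length_cons]; ring
  calc norm x = norm l.prod := by rw [hp]
    _ ≤ L * l.length := key l hmem
    _ = L * wordLength S x := by rw [hlen]

end BiLip
section Morse

open FreeGroup

variable {α : Type*} [DecidableEq α] {S : Set (FreeGroup α)}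

lemma morse {L c : ℕ} (hS : FinSymGen S)
    (hL1 : ∀ s ∈ S, norm s ≤ L) (hL2 : ∀ a : α, wordLength S (FreeGroup.of a) ≤ L)
    {z u : FreeGroup α}
    (hgeo : wordLength S z + wordLength S (z⁻¹ * u) ≤ wordLength S u + c) :
    norm z ≤ (comPre z.toWord u.toWord).length + (L * (2 * L * L + c) + L) := by
  classical
  by_contra hcon
  push_neg at hcon
  obtain ⟨ζ, υ, hzw, huw, hmax⟩ := comPre_spec z.toWord u.toWord
  obtain ⟨hp1, hp2, hp3, hp4, hp5, hp6⟩ := prefix_split (x := z) hzw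
  obtain ⟨hq1, hq2, hq3, hq4, hq5, hq6⟩ := prefix_split (x := u) huw
  set p : FreeGroup α := mk (comPre z.toWord u.toWord) with hpdef
  have hDbig : L * (2 * L * L + c) + L < ζ.length := by omega
  rcases hζ : ζ with _ | ⟨ch, ζt⟩
  · rw [hζ] at hDbig; simp at hDbig
  have hheadz : (toWord (p⁻¹ * z)).head? = some ch := by
    rw [hp3, hp2, hζ]; rfl
  have hheadu : (toWord (p⁻¹ * u)).head? ≠ some ch := by
    rw [hq3, hq2]
    exact hmax ch (by rw [hζ]; rfl)
  have hhead1 : (toWord (p⁻¹ * 1)).head? ≠ some ch := by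
    rw [mul_one]
    rw [toWord_inv, hp1]
    rcases hw1 : comPre z.toWord u.toWord with _ | ⟨e, w1t⟩
    · simp [invRev]
    · intro hcontra
      have hlast : (comPre z.toWord u.toWord).getLast? = some ((comPre z.toWord u.toWord).getLast (by rw [hw1]; simp)) := List.getLast?_eq_getLast _
      set a := (comPre z.toWord u.toWord).getLast (by rw [hw1]; simp) with hadef
      have hhead : (invRev (comPre z.toWord u.toWord)).head? = some (a.1, !a.2) := by
        rw [invRev, List.head?_reverse, List.getLast?_map, hlast]; rfl
      rw [hw1] at hhead
      rw [hhead] at hcontra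

      have hceq : ch = (a.1, !a.2) := by
        simpa using hcontra.symm
      -- junction of chain: toWord z = comPre ++ ζ
      have hch : List.Chain' NC (comPre z.toWord u.toWord ++ ζ) := hzw ▸ chain_toWord z
      have hnc : NC a ch := by
        have := (List.isChain_append.mp hch).2.2
        apply this
        · rw [hlast]; rfl
        · rw [hζ]; rfl
      apply hnc
      rw [hceq]
      exact ⟨rfl, by simp⟩
  -- geodesic chain
  obtain ⟨l₁, hm₁, hlen₁, hprod₁⟩ := wordLength_exists hS z
  obtain ⟨l₂, hm₂, hlen₂, hprod₂⟩ := wordLength_exists hS (z⁻¹ * u)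
  set m₁ := wordLength S z with hm₁def
  set m₂ := wordLength S (z⁻¹ * u) with hm₂def
  set ll := l₁ ++ l₂ with hlldef
  have hlllen : ll.length = m₁ + m₂ := by
    rw [hlldef, List.length_append, hlen₁, hlen₂]
  have hllmem : ∀ s ∈ ll, s ∈ S := by
    intro s hs; rcases List.mem_append.mp hs with hh | hh
    exacts [hm₁ s hh, hm₂ s hh]
  set X : ℕ → FreeGroup α := fun i => (ll.take i).prod with hXdef
  have hX0 : X 0 = 1 := by simp [hXdef]
  have hXm₁ : X m₁ = z := by
    have : ll.take m₁ = l₁ := by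
      rw [hlldef, ← hlen₁, List.take_left]
    rw [hXdef]; simp only [this, hprod₁]
  have hXm : X (m₁ + m₂) = u := by
    have : ll.take (m₁ + m₂) = ll := List.take_of_length_le (by omega)
    rw [hXdef]; simp only [this, hlldef, List.prod_append, hprod₁, hprod₂]
    rw [← hlldef, this, hlldef, List.prod_append, hprod₁, hprod₂]; group
  have hstep : ∀ i, ∃ s, (s ∈ S ∨ s = 1) ∧ X (i + 1) = X i * s := by
    intro i
    by_cases hi : i < ll.length
    · refine ⟨ll[i]'hi, Or.inl (hllmem _ (List.getElem_mem hi)), ?_⟩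
      have : ll.take (i+1) = ll.take i ++ [ll[i]'hi] := by
        rw [List.take_succ]
        congr
        rw [List.getElem?_eq_getElem hi]
        rfl
      rw [hXdef]; simp only [this, List.prod_append, List.prod_cons, List.prod_nil, mul_one]
    · refine ⟨1, Or.inr rfl, ?_⟩
      push_neg at hi
      rw [hXdef]
      simp only [List.take_of_length_le hi, List.take_of_length_le (le_trans hi (Nat.le_succ i)),
        mul_one]
  have hchain : ∀ i k, wordLength S ((X i)⁻¹ * X (i + k)) ≤ k := by
    intro i k
    induction k with
    | zero => simp [wordLength_one]
    | succ k ih =>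
      obtain ⟨s, hs, hXs⟩ := hstep (i + k)
      have heq : (X i)⁻¹ * X (i + (k+1)) = ((X i)⁻¹ * X (i + k)) * s := by
        rw [show i + (k+1) = (i + k) + 1 by omega, hXs]; group
      rw [heq]
      calc wordLength S (((X i)⁻¹ * X (i + k)) * s)
          ≤ wordLength S ((X i)⁻¹ * X (i + k)) + wordLength S s := wordLength_mul_le hS _ _
        _ ≤ k + 1 := by
            refine add_le_add ih ?_
            rcases hs with hs | hs
            · exact wordLength_le (l := [s]) (by simpa using hs) (by simp)
            · simp [hs, wordLength_one]
  have hstepnorm : ∀ i, norm ((X i)⁻¹ * X (i + 1)) ≤ L := by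
    intro i
    obtain ⟨s, hs, hXs⟩ := hstep i
    have : (X i)⁻¹ * X (i+1) = s := by rw [hXs]; group
    rw [this]
    rcases hs with hs | hs
    · exact hL1 s hs
    · simp [hs, FreeGroup.norm_one]
  have hlower : ∀ i j, i ≤ j → j ≤ m₁ + m₂ →
      j ≤ wordLength S ((X i)⁻¹ * X j) + i + c := by
    intro i j hij hjm
    have t1 : wordLength S u ≤ wordLength S (X i) + wordLength S ((X i)⁻¹ * X j)
        + wordLength S ((X j)⁻¹ * u) := by
      have : u = X i * ((X i)⁻¹ * X j) * ((X j)⁻¹ * u) := by group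
      calc wordLength S u = wordLength S (X i * ((X i)⁻¹ * X j) * ((X j)⁻¹ * u)) := by rw [← this]
        _ ≤ wordLength S (X i * ((X i)⁻¹ * X j)) + wordLength S ((X j)⁻¹ * u) :=
            wordLength_mul_le hS _ _
        _ ≤ wordLength S (X i) + wordLength S ((X i)⁻¹ * X j) + wordLength S ((X j)⁻¹ * u) := by
            have := wordLength_mul_le hS (X i) ((X i)⁻¹ * X j)
            omega
    have t2 : wordLength S (X i) ≤ i := by
      have := hchain 0 i
      rw [hX0] at this; simpa using this
    have t3 : wordLength S ((X j)⁻¹ * u) ≤ m₁ + m₂ - j := by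
      have := hchain j (m₁ + m₂ - j)
      rw [show j + (m₁ + m₂ - j) = m₁ + m₂ by omega, hXm] at this
      exact this
    omega
  set inC : ℕ → Prop := fun i => (toWord (p⁻¹ * X i)).head? = some ch with hinCdef
  have hinC0 : ¬ inC 0 := by rw [hinCdef]; simp only [hX0]; exact hhead1
  have hinCm₁ : inC m₁ := by rw [hinCdef]; simp only [hXm₁]; exact hheadz
  have hinCm : ¬ inC (m₁ + m₂) := by rw [hinCdef]; simp only [hXm]; exact hheadu
  set i₀ := Nat.findGreatest (fun i => ¬ inC i) m₁ with hi₀def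
  have hi₀spec : ¬ inC i₀ := Nat.findGreatest_spec (P := fun i => ¬ inC i) (Nat.zero_le m₁) hinC0
  have hi₀le : i₀ ≤ m₁ := Nat.findGreatest_le (P := fun i => ¬ inC i) m₁
  have hi₀lt : i₀ < m₁ := lt_of_le_of_ne hi₀le (fun hc => hi₀spec (hc ▸ hinCm₁))
  have hi₀succ : inC (i₀ + 1) := by
    by_contra hcc
    exact (Nat.findGreatest_is_greatest (P := fun i => ¬ inC i) (Nat.lt_succ_self i₀) (by omega) : ¬¬ inC (i₀+1))
      hcc
  have hexj : ∃ j', ¬ inC (m₁ + j') := ⟨m₂, hinCm⟩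
  set j₀ := Nat.find hexj with hj₀def
  have hj₀spec : ¬ inC (m₁ + j₀) := Nat.find_spec hexj
  have hj₀pos : j₀ ≠ 0 := by
    intro hc
    rw [hc] at hj₀spec
    simp only [add_zero] at hj₀spec
    exact hj₀spec hinCm₁
  have hj₀le : j₀ ≤ m₂ := Nat.find_min' hexj hinCm
  have hjprev : inC (m₁ + (j₀ - 1)) := by
    by_contra hcc
    exact Nat.find_min hexj (show j₀ - 1 < j₀ by omega) hcc
  -- separation bounds
  have sep1 : norm (p⁻¹ * X i₀) ≤ L := by
    have hts := tree_sep (p := p) (v := X (i₀ + 1)) (v' := X i₀) hi₀succ hi₀spec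
    have heq : (X (i₀+1))⁻¹ * X i₀ = ((X i₀)⁻¹ * X (i₀ + 1))⁻¹ := by group
    rw [heq, norm_inv_eq] at hts
    exact le_trans hts (hstepnorm i₀)
  have sep2 : norm (p⁻¹ * X (m₁ + j₀)) ≤ L := by
    have hts := tree_sep (p := p) (v := X (m₁ + (j₀ - 1))) (v' := X (m₁ + j₀)) hjprev hj₀spec
    have heq : m₁ + j₀ = (m₁ + (j₀ - 1)) + 1 := by omega
    refine le_trans hts ?_
    rw [heq]
    exact hstepnorm _
  set j := m₁ + j₀ with hjdef
  have d1 : wordLength S ((X i₀)⁻¹ * X j) ≤ L * (2 * L) := by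
    have hc1 : norm ((X i₀)⁻¹ * X j) ≤ 2 * L := by
      have heq : (X i₀)⁻¹ * X j = ((X i₀)⁻¹ * p) * (p⁻¹ * X j) := by group
      rw [heq]
      calc norm (((X i₀)⁻¹ * p) * (p⁻¹ * X j)) ≤ norm ((X i₀)⁻¹ * p) + norm (p⁻¹ * X j) :=
            norm_mul_le _ _
        _ ≤ L + L := by
            refine add_le_add ?_ sep2
            have : (X i₀)⁻¹ * p = (p⁻¹ * X i₀)⁻¹ := by group
            rw [this, norm_inv_eq]
            exact sep1
        _ = 2 * L := by ring
    calc wordLength S ((X i₀)⁻¹ * X j) ≤ L * norm ((X i₀)⁻¹ * X j) := wl_le_norm hS hL2 _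
      _ ≤ L * (2 * L) := Nat.mul_le_mul_left L hc1
  have d2 : j ≤ 2 * L * L + i₀ + c := by
    have h5 := hlower i₀ j (by omega) (by omega)
    have hmul : L * (2 * L) = 2 * L * L := by ring
    omega
  have d3 : norm (p⁻¹ * z) ≤ L + L * (2 * L * L + c) := by
    have hsplit : p⁻¹ * z = (p⁻¹ * X j) * ((X j)⁻¹ * z) := by group
    have hwlj : wordLength S ((X j)⁻¹ * z) ≤ j₀ := by
      have h1 := hchain m₁ j₀
      have heq : ((X m₁)⁻¹ * X (m₁ + j₀))⁻¹ = (X j)⁻¹ * X m₁ := by rw [hjdef]; group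
      have h2 : wordLength S ((X j)⁻¹ * X m₁) ≤ j₀ := by
        rw [← heq, wordLength_inv hS]; exact h1
      rw [← hXm₁]; exact h2
    have hj₀bound : j₀ ≤ 2 * L * L + c := by omega
    calc norm (p⁻¹ * z) ≤ norm (p⁻¹ * X j) + norm ((X j)⁻¹ * z) := by
          rw [hsplit]; exact norm_mul_le _ _
      _ ≤ L + L * wordLength S ((X j)⁻¹ * z) := add_le_add sep2 (norm_le_wl hS hL1 _)
      _ ≤ L + L * (2 * L * L + c) := by
          have : wordLength S ((X j)⁻¹ * z) ≤ 2 * L * L + c := le_trans hwlj hj₀bound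
          exact Nat.add_le_add_left (Nat.mul_le_mul_left L this) L
  have hfin : norm (p⁻¹ * z) = ζ.length := hp5
  omega

end Morse
lemma nat_le_of_lt_half {A B : ℕ} (H : (A : ℝ) < B + 1/2) : A ≤ B := by
  have h1 : (A : ℝ) < B + 1 := by linarith
  have h2 : A < B + 1 := by exact_mod_cast h1
  omega

section MGL

open FreeGroup

variable {α : Type*} [DecidableEq α] {S : Set (FreeGroup α)} {h : FreeGroup α → ℝ}
  {u : ℕ → FreeGroup α}

lemma conj_bounded {L : ℕ} (hS : FinSymGen S)
    (hL1 : ∀ s ∈ S, norm s ≤ L) (hL2 : ∀ a : α, wordLength S (FreeGroup.of a) ≤ L)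
    (hu : ∀ y, Filter.Tendsto (fun n => bus (wordDist S) (u n) y) Filter.atTop (𝓝 (h y)))
    {g y : FreeGroup α}
    (hcal : h y = -(wordLength S y : ℝ))
    (hg : ∀ z, h (g * z) = h g + h z) :
    norm (y⁻¹ * g * y) ≤ norm g + 2 * (L * (2 * L * L + 0) + L)
      + 2 * (L * (2 * L * L + 2 * wordLength S g) + L) := by
  classical
  -- find a good n
  obtain ⟨N₁, hN₁⟩ := Metric.tendsto_atTop.mp (hu y) (1/2) (by norm_num)
  obtain ⟨N₂, hN₂⟩ := Metric.tendsto_atTop.mp (hu (g * y)) (1/2) (by norm_num)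
  set n := max N₁ N₂ with hn
  have hd₁ := hN₁ n (le_max_left _ _)
  have hd₂ := hN₂ n (le_max_right _ _)
  rw [Real.dist_eq, abs_lt] at hd₁ hd₂
  -- geodesic conditions
  have hbus₁ : bus (wordDist S) (u n) y =
      (wordLength S ((u n)⁻¹ * y) : ℝ) - (wordLength S (u n) : ℝ) := by
    rw [bus_wordDist, wordLength_inv hS]
  have hbus₂ : bus (wordDist S) (u n) (g * y) =
      (wordLength S ((u n)⁻¹ * (g * y)) : ℝ) - (wordLength S (u n) : ℝ) := by
    rw [bus_wordDist, wordLength_inv hS]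
  have geo1 : wordLength S y + wordLength S (y⁻¹ * u n) ≤ wordLength S (u n) + 0 := by
    have h1 : (wordLength S ((u n)⁻¹ * y) : ℝ) + wordLength S y < wordLength S (u n) + 1/2 := by
      have := hd₁.2
      rw [hbus₁, hcal] at this
      linarith
    have h2 : wordLength S ((u n)⁻¹ * y) + wordLength S y ≤ wordLength S (u n) := by
      apply nat_le_of_lt_half
      push_cast
      linarith
    have h3 : wordLength S (y⁻¹ * u n) = wordLength S ((u n)⁻¹ * y) := by
      rw [← wordLength_inv hS (y⁻¹ * u n)]
      congr 1
      group
    omega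
  have geo2 : wordLength S (g * y) + wordLength S ((g * y)⁻¹ * u n) ≤
      wordLength S (u n) + 2 * wordLength S g := by
    have hgy : h (g * y) = h g - (wordLength S y : ℝ) := by rw [hg y, hcal]; ring
    have hgle : h g ≤ (wordLength S g : ℝ) := h_le hu hS g
    have h1 : (wordLength S ((u n)⁻¹ * (g * y)) : ℝ) + wordLength S y <
        wordLength S (u n) + wordLength S g + 1/2 := by
      have := hd₂.2
      rw [hbus₂, hgy] at this
      linarith
    have h2 : wordLength S ((u n)⁻¹ * (g * y)) + wordLength S y ≤
        wordLength S (u n) + wordLength S g := by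
      apply nat_le_of_lt_half
      push_cast
      linarith
    have h3 : wordLength S ((g * y)⁻¹ * u n) = wordLength S ((u n)⁻¹ * (g * y)) := by
      rw [← wordLength_inv hS ((g * y)⁻¹ * u n)]
      congr 1
      group
    have h4 : wordLength S (g * y) ≤ wordLength S g + wordLength S y := wordLength_mul_le hS _ _
    omega
  -- Morse applications
  have morse1 := morse hS hL1 hL2 geo1
  have morse2 := morse hS hL1 hL2 geo2
  set cp₁ := comPre y.toWord (u n).toWord with hcp₁
  set cp₂ := comPre (g * y).toWord (u n).toWord with hcp₂
  set p : FreeGroup α := mk cp₁ with hp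
  set p' : FreeGroup α := mk cp₂ with hp'
  obtain ⟨r₁, hr₁⟩ := comPre_prefix_left y.toWord (u n).toWord
  obtain ⟨r₂, hr₂⟩ := comPre_prefix_left (g * y).toWord (u n).toWord
  obtain ⟨sp₁, sp₂, sp₃, sp₄, sp₅, sp₆⟩ := prefix_split (x := y) hr₁.symm
  obtain ⟨tp₁, tp₂, tp₃, tp₄, tp₅, tp₆⟩ := prefix_split (x := g * y) hr₂.symm
  have hpy : norm (p⁻¹ * y) = r₁.length := sp₅
  have hp'gy : norm (p'⁻¹ * (g * y)) = r₂.length := tp₅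
  have hn_y : norm y = cp₁.length + r₁.length := sp₆
  have hn_gy : norm (g * y) = cp₂.length + r₂.length := tp₆
  have hptw : p.toWord = cp₁ := sp₁
  have hp'tw : p'.toWord = cp₂ := tp₁
  have hbound1 : norm (p⁻¹ * y) ≤ L * (2 * L * L + 0) + L := by omega
  have hbound2 : norm (p'⁻¹ * (g * y)) ≤ L * (2 * L * L + 2 * wordLength S g) + L := by omega
  obtain ⟨s₁, hs₁⟩ := comPre_prefix_right y.toWord (u n).toWord
  obtain ⟨s₂, hs₂⟩ := comPre_prefix_right (g * y).toWord (u n).toWord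
  have hng₁ : norm (g * y) ≤ norm g + norm y := norm_mul_le _ _
  have hng₂ : norm y ≤ norm g + norm (g * y) := by
    have heq : y = g⁻¹ * (g * y) := by group
    calc norm y = norm (g⁻¹ * (g * y)) := by rw [← heq]
      _ ≤ norm g⁻¹ + norm (g * y) := norm_mul_le _ _
      _ = norm g + norm (g * y) := by rw [norm_inv_eq]
  have htotal : norm (y⁻¹ * g * y) ≤ norm (p⁻¹ * y) + norm (p⁻¹ * p') +
      norm (p'⁻¹ * (g * y)) := by
    have heq : y⁻¹ * g * y = (y⁻¹ * p) * ((p⁻¹ * p') * (p'⁻¹ * (g * y))) := by group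
    calc norm (y⁻¹ * g * y) = norm ((y⁻¹ * p) * ((p⁻¹ * p') * (p'⁻¹ * (g * y)))) := by rw [← heq]
      _ ≤ norm (y⁻¹ * p) + norm ((p⁻¹ * p') * (p'⁻¹ * (g * y))) := norm_mul_le _ _
      _ ≤ norm (y⁻¹ * p) + (norm (p⁻¹ * p') + norm (p'⁻¹ * (g * y))) := by
          have := norm_mul_le (p⁻¹ * p') (p'⁻¹ * (g * y))
          omega
      _ = norm (p⁻¹ * y) + norm (p⁻¹ * p') + norm (p'⁻¹ * (g * y)) := by
          have heq2 : y⁻¹ * p = (p⁻¹ * y)⁻¹ := by group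
          rw [heq2, norm_inv_eq]; ring
  have hmiddle : norm (p⁻¹ * p') ≤ (cp₂.length - cp₁.length) + (cp₁.length - cp₂.length) := by
    rcases le_total cp₁.length cp₂.length with hle | hle
    · have hpre : cp₁ <+: cp₂ := List.prefix_of_prefix_length_le ⟨s₁, hs₁⟩ ⟨s₂, hs₂⟩ hle
      obtain ⟨mid, hmid⟩ := hpre
      have hw : p'.toWord = cp₁ ++ mid := by rw [hp'tw, ← hmid]
      obtain ⟨wq1, wq2, wq3, wq4, wq5, wq6⟩ := prefix_split (x := p') hw
      have hmn : norm (p⁻¹ * p') = mid.length := wq5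
      have hmidlen : cp₁.length + mid.length = cp₂.length := by
        rw [← hmid, List.length_append]
      omega
    · have hpre : cp₂ <+: cp₁ := List.prefix_of_prefix_length_le ⟨s₂, hs₂⟩ ⟨s₁, hs₁⟩ hle
      obtain ⟨mid, hmid⟩ := hpre
      have hw : p.toWord = cp₂ ++ mid := by rw [hptw, ← hmid]
      obtain ⟨wq1, wq2, wq3, wq4, wq5, wq6⟩ := prefix_split (x := p) hw
      have hmn0 : norm (p'⁻¹ * p) = mid.length := wq5
      have hmn : norm (p⁻¹ * p') = mid.length := by
        have heq : p⁻¹ * p' = (p'⁻¹ * p)⁻¹ := by group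
        rw [heq, norm_inv_eq, hmn0]
      have hmidlen : cp₂.length + mid.length = cp₁.length := by
        rw [← hmid, List.length_append]
      omega
  omega

end MGL
section Commute

open FreeGroup

variable {α : Type*} [DecidableEq α]

lemma toWord_mul_nc {x y : FreeGroup α}
    (hj : ∀ a ∈ x.toWord.getLast?, ∀ b ∈ y.toWord.head?, NC a b) :
    (x * y).toWord = x.toWord ++ y.toWord := by
  conv_lhs => rw [← mk_toWord (x := x), ← mk_toWord (x := y)]
  rw [mul_mk, toWord_mk]
  exact reduce_eq_self_of_chain (List.isChain_append.mpr ⟨chain_toWord x, chain_toWord y, hj⟩)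

lemma repl_head {β : Type*} {n : ℕ} (hn : 1 ≤ n) (x : β) :
    (List.replicate n x).head? = some x := by
  cases n with
  | zero => omega
  | succ n => simp [List.replicate_succ]

lemma repl_last {β : Type*} {n : ℕ} (hn : 1 ≤ n) (x : β) :
    (List.replicate n x).getLast? = some x := by
  rw [← List.head?_reverse, List.reverse_replicate]
  exact repl_head hn x

lemma pow_mul_ne {a b : α} (hab : a ≠ b) {e₁ e₂ : ℕ} (h₁ : 1 ≤ e₁) (h₂ : 1 ≤ e₂) :
    FreeGroup.of a ^ e₁ * FreeGroup.of b ^ e₂ ≠ FreeGroup.of b ^ e₂ * FreeGroup.of a ^ e₁ := by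
  intro hcon
  have hw := congrArg toWord hcon
  have hj₁ : ∀ p ∈ (FreeGroup.of a ^ e₁).toWord.getLast?,
      ∀ q ∈ (FreeGroup.of b ^ e₂).toWord.head?, NC p q := by
    intro p hp q hq
    rw [toWord_of_pow, repl_last h₁] at hp
    rw [toWord_of_pow, repl_head h₂] at hq
    rw [Option.mem_some_iff] at hp hq
    subst hp; subst hq
    intro ⟨hc, _⟩
    exact hab hc
  have hj₂ : ∀ p ∈ (FreeGroup.of b ^ e₂).toWord.getLast?,
      ∀ q ∈ (FreeGroup.of a ^ e₁).toWord.head?, NC p q := by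
    intro p hp q hq
    rw [toWord_of_pow, repl_last h₂] at hp
    rw [toWord_of_pow, repl_head h₁] at hq
    rw [Option.mem_some_iff] at hp hq
    subst hp; subst hq
    intro ⟨hc, _⟩
    exact hab hc.symm
  rw [toWord_mul_nc hj₁, toWord_mul_nc hj₂, toWord_of_pow, toWord_of_pow] at hw
  have hhead := congrArg List.head? hw
  rw [List.head?_append, List.head?_append, repl_head h₁, repl_head h₂] at hhead
  have : (a, true) = (b, true) := by
    simpa using hhead
  exact hab (congrArg Prod.fst this)

end Commute

section CommuteCyclic

lemma commute_cyclic {G' : Type*} [Group G'] [IsFreeGroup G'] {x y : G'} (hc : Commute x y) :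
    ∃ c : G', (∃ i : ℤ, x = c ^ i) ∧ (∃ j : ℤ, y = c ^ j) := by
  classical
  set K := Subgroup.closure ({x, y} : Set G') with hK
  have hxK : x ∈ K := Subgroup.subset_closure (by simp)
  have hyK : y ∈ K := Subgroup.subset_closure (by simp)
  have hgen : ∀ u ∈ K, Commute x u ∧ Commute y u := by
    intro u hu
    induction hu using Subgroup.closure_induction with
    | mem g hg =>
      rcases hg with hg | hg
      · subst hg; exact ⟨Commute.refl _, hc.symm⟩
      · simp only [Set.mem_singleton_iff] at hg
        subst hg; exact ⟨hc, Commute.refl _⟩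
    | one => exact ⟨Commute.one_right x, Commute.one_right y⟩
    | mul g₁ g₂ _ _ ih₁ ih₂ => exact ⟨ih₁.1.mul_right ih₂.1, ih₁.2.mul_right ih₂.2⟩
    | inv g _ ih => exact ⟨ih.1.inv_right, ih.2.inv_right⟩
  have hcomm : ∀ u ∈ K, ∀ v ∈ K, Commute u v := by
    intro u hu v hv
    induction hu using Subgroup.closure_induction with
    | mem g hg =>
      rcases hg with hg | hg
      · subst hg; exact (hgen v hv).1
      · simp only [Set.mem_singleton_iff] at hg
        subst hg; exact (hgen v hv).2
    | one => exact Commute.one_left v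
    | mul g₁ g₂ _ _ ih₁ ih₂ => exact ih₁.mul_left ih₂
    | inv g _ ih => exact ih.inv_left
  haveI : IsFreeGroup K := inferInstance
  set T := IsFreeGroup.Generators K with hT
  set e : FreeGroup T ≃* K := IsFreeGroup.mulEquiv K with he
  have hTsub : ∀ t₁ t₂ : T, t₁ = t₂ := by
    intro t₁ t₂
    by_contra hne
    have h1 : Commute ((e (FreeGroup.of t₁) : K) : G') ((e (FreeGroup.of t₂) : K) : G') :=
      hcomm _ (e (FreeGroup.of t₁)).2 _ (e (FreeGroup.of t₂)).2
    have h2 : FreeGroup.of t₁ * FreeGroup.of t₂ = FreeGroup.of t₂ * FreeGroup.of t₁ := by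
      apply e.injective
      rw [map_mul, map_mul]
      exact Subtype.ext h1
    have := pow_mul_ne hne (le_refl 1) (le_refl 1)
    simp only [pow_one] at this
    exact this h2
  rcases isEmpty_or_nonempty T with hTe | hTn
  · have htriv : ∀ w : FreeGroup T, w = 1 := by
      intro w
      refine FreeGroup.induction_on w rfl (fun t => hTe.elim t) (fun t _ => hTe.elim t)
        (fun w₁ w₂ h₁ h₂ => by rw [h₁, h₂, one_mul])
    have hx1 : x = 1 := by
      have : (⟨x, hxK⟩ : K) = e (e.symm ⟨x, hxK⟩) := (e.apply_symm_apply _).symm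
      rw [htriv (e.symm ⟨x, hxK⟩), map_one] at this
      exact congrArg Subtype.val this
    have hy1 : y = 1 := by
      have : (⟨y, hyK⟩ : K) = e (e.symm ⟨y, hyK⟩) := (e.apply_symm_apply _).symm
      rw [htriv (e.symm ⟨y, hyK⟩), map_one] at this
      exact congrArg Subtype.val this
    exact ⟨1, ⟨0, by simp [hx1]⟩, ⟨0, by simp [hy1]⟩⟩
  · obtain ⟨t₀⟩ := hTn
    have hzpow : ∀ w : FreeGroup T, ∃ n : ℤ, w = (FreeGroup.of t₀) ^ n := by
      intro w
      refine FreeGroup.induction_on w ⟨0, by simp⟩ ?_ ?_ ?_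
      · intro t
        exact ⟨1, by rw [hTsub t t₀]; simp⟩
      · rintro t ⟨n, hn⟩
        exact ⟨-n, by rw [hn, zpow_neg]⟩
      · rintro w₁ w₂ ⟨n₁, hn₁⟩ ⟨n₂, hn₂⟩
        exact ⟨n₁ + n₂, by rw [hn₁, hn₂, zpow_add]⟩
    set c : G' := ((e (FreeGroup.of t₀) : K) : G') with hcdef
    have key : ∀ g : G', ∀ hg : g ∈ K, ∃ i : ℤ, g = c ^ i := by
      intro g hg
      obtain ⟨i, hi⟩ := hzpow (e.symm ⟨g, hg⟩)
      refine ⟨i, ?_⟩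
      have h3 : (⟨g, hg⟩ : K) = (e (FreeGroup.of t₀)) ^ i := by
        conv_lhs => rw [← e.apply_symm_apply ⟨g, hg⟩]
        rw [hi, map_zpow]
      have h4 := congrArg Subtype.val h3
      simp only [SubgroupClass.coe_zpow] at h4
      exact h4
    exact ⟨c, key x hxK, key y hyK⟩

end CommuteCyclic

/-- In any Cayley graph of the free group of rank `d ≥ 2`, no
metric functional has a finite orbit. -/
theorem freeGroup_no_finite_orbit_in_boundary
    {d : ℕ} (hd : 2 ≤ d) (S : Set (FreeGroup (Fin d))) (hS : FinSymGen S)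
    (h : FreeGroup (Fin d) → ℝ) (hb : InBoundary (wordDist S) h) :
    (Set.range fun x : FreeGroup (Fin d) => act x h).Infinite := by
  classical
  by_contra horb
  rw [Set.not_infinite] at horb
  obtain ⟨⟨u, hu⟩, hnb⟩ := hb
  have h1 : h 1 = 0 := h_one hu
  -- the stabilizer subgroup
  set Hs : Subgroup (FreeGroup (Fin d)) :=
    { carrier := {x : FreeGroup (Fin d) | ∀ z, h (x * z) = h x + h z}
      one_mem' := by intro z; simp [h1]
      mul_mem' := by
        intro a b ha hb'
        intro z
        have e1 : h (a * b * z) = h a + h (b * z) := by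
          rw [show a * b * z = a * (b * z) by group, ha (b * z)]
        have e2 : h (a * b) = h a + h b := ha b
        rw [e1, hb' z, e2]
        ring
      inv_mem' := by
        intro a ha
        have hainv : h a⁻¹ = -h a := by
          have := ha a⁻¹
          rw [mul_inv_cancel, h1] at this
          linarith
        intro z
        have := ha (a⁻¹ * z)
        rw [show a * (a⁻¹ * z) = z by group] at this
        rw [hainv]
        linarith } with hHs
  have hmem_iff : ∀ x : FreeGroup (Fin d), x ∈ Hs ↔ ∀ z, h (x * z) = h x + h z := fun x => Iff.rfl
  have hneg : ∀ x ∈ Hs, h x⁻¹ = -h x := by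
    intro x hx
    have := hx x⁻¹
    rw [mul_inv_cancel, h1] at this
    linarith
  -- act basics
  have act_one : act (1 : FreeGroup (Fin d)) h = h := by
    funext z; simp [act, h1]
  have act_mul : ∀ x y : FreeGroup (Fin d), act (x * y) h = act x (act y h) := by
    intro x y; funext z
    simp only [act, mul_inv_rev, mul_assoc]
    ring
  have hact_mem : ∀ x : FreeGroup (Fin d), x ∈ Hs → act x h = h := by
    intro x hx
    funext z
    have hxinv := Hs.inv_mem hx
    simp only [act]
    rw [hxinv z]
    ring
  have hmem_act : ∀ x : FreeGroup (Fin d), act x h = h → x ∈ Hs := by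
    intro x hax
    have hxinv : x⁻¹ ∈ Hs := by
      intro z
      have := congrFun hax z
      simp only [act] at this
      linarith
    simpa using Hs.inv_mem hxinv
  -- finite quotient
  haveI hfinorb : Finite ↥(Set.range fun x : FreeGroup (Fin d) => act x h) := horb.to_subtype
  have hresp : ∀ a b : FreeGroup (Fin d), (QuotientGroup.leftRel Hs) a b →
      (⟨act a h, ⟨a, rfl⟩⟩ : ↥(Set.range fun x : FreeGroup (Fin d) => act x h)) = ⟨act b h, ⟨b, rfl⟩⟩ := by
    intro a b hab
    rw [QuotientGroup.leftRel_apply] at hab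
    refine Subtype.ext ?_
    show act a h = act b h
    have : act b h = act (a * (a⁻¹ * b)) h := by rw [show a * (a⁻¹ * b) = b by group]
    rw [this, act_mul, hact_mem _ hab]
  haveI hfinquot : Finite (FreeGroup (Fin d) ⧸ Hs) := by
    refine Finite.of_injective
      (Quotient.lift (fun x : FreeGroup (Fin d) => (⟨act x h, ⟨x, rfl⟩⟩ : ↥(Set.range fun x : FreeGroup (Fin d) => act x h)))
        hresp) ?_
    intro q1 q2
    refine Quotient.inductionOn₂ q1 q2 ?_
    intro a b hfab
    have hab : act a h = act b h := congrArg Subtype.val hfab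
    have : a⁻¹ * b ∈ Hs := by
      apply hmem_act
      rw [act_mul, ← hab, ← act_mul]
      simp only [inv_mul_cancel, act_one]
    exact Quotient.sound ((QuotientGroup.leftRel_apply).mpr this)
  -- calibrated points
  choose Y hY1 hY2 using calibrated hu hS hnb
  -- bi-Lipschitz constants
  set L : ℕ := (hS.1.toFinset.sup FreeGroup.norm) +
    ((Finset.univ : Finset (Fin d)).sup fun a => wordLength S (FreeGroup.of a)) with hLdef
  have hL1 : ∀ s ∈ S, FreeGroup.norm s ≤ L := by
    intro s hs
    have := Finset.le_sup (f := FreeGroup.norm) (hS.1.mem_toFinset.mpr hs)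
    omega
  have hL2 : ∀ a : Fin d, wordLength S (FreeGroup.of a) ≤ L := by
    intro a
    have h9 : wordLength S (FreeGroup.of a) ≤
        Finset.univ.sup fun a => wordLength S (FreeGroup.of a) :=
      Finset.le_sup (f := fun a : Fin d => wordLength S (FreeGroup.of a)) (Finset.mem_univ a)
    omega
  -- powers landing in Hs
  have hpow_mem : ∀ g : FreeGroup (Fin d), ∃ e : ℕ, 1 ≤ e ∧ g ^ e ∈ Hs := by
    intro g
    obtain ⟨m, n, hmn, heq⟩ := Finite.exists_ne_map_eq_of_infinite
      (fun n : ℕ => QuotientGroup.mk (s := Hs) (g ^ n))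
    rcases Nat.lt_or_ge m n with hlt | hge
    · refine ⟨n - m, by omega, ?_⟩
      have hthis := QuotientGroup.eq.mp heq
      have hsplit : g ^ n = g ^ m * g ^ (n - m) := by
        rw [← pow_add]; congr 1; omega
      rwa [show (g ^ m)⁻¹ * g ^ n = g ^ (n - m) from by rw [hsplit]; group] at hthis
    · have hlt : n < m := by omega
      refine ⟨m - n, by omega, ?_⟩
      have hthis := QuotientGroup.eq.mp heq.symm
      have hsplit : g ^ m = g ^ n * g ^ (m - n) := by
        rw [← pow_add]; congr 1; omega
      rwa [show (g ^ n)⁻¹ * g ^ m = g ^ (m - n) from by rw [hsplit]; group] at hthis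
  -- two independent elements of Hs
  set i0 : Fin d := ⟨0, by omega⟩ with hi0
  set i1 : Fin d := ⟨1, by omega⟩ with hi1
  have hi01 : i0 ≠ i1 := by
    intro hcon
    have := congrArg Fin.val hcon
    simp [hi0, hi1] at this
  obtain ⟨e₁, he₁, hx₁⟩ := hpow_mem (FreeGroup.of i0)
  obtain ⟨e₂, he₂, hx₂⟩ := hpow_mem (FreeGroup.of i1)
  set x₁ : FreeGroup (Fin d) := FreeGroup.of i0 ^ e₁ with hx₁def
  set x₂ : FreeGroup (Fin d) := FreeGroup.of i1 ^ e₂ with hx₂def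
  set bb : FreeGroup (Fin d) := x₁ * x₂ * x₁⁻¹ * x₂⁻¹ with hbbdef
  have hbbH : bb ∈ Hs := by
    exact Hs.mul_mem (Hs.mul_mem (Hs.mul_mem hx₁ hx₂) (Hs.inv_mem hx₁)) (Hs.inv_mem hx₂)
  have hbbne : bb ≠ 1 := by
    intro hcon
    have h5 : x₁ * x₂ * x₁⁻¹ * x₂⁻¹ * (x₂ * x₁) = x₁ * x₂ := by group
    rw [show x₁ * x₂ * x₁⁻¹ * x₂⁻¹ = bb from rfl, hcon, one_mul] at h5
    exact pow_mul_ne hi01 he₁ he₂ h5.symm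
  have hbb0 : h bb = 0 := by
    have e1 : h bb = h x₁ + h (x₂ * (x₁⁻¹ * x₂⁻¹)) := by
      rw [show bb = x₁ * (x₂ * (x₁⁻¹ * x₂⁻¹)) by rw [hbbdef]; group]
      exact hx₁ _
    rw [hx₂ _, (Hs.inv_mem hx₁) _, hneg _ hx₁, hneg _ hx₂] at e1
    linarith
  -- zpow lemmas on Hs
  have hpow_h : ∀ x, x ∈ Hs → ∀ n : ℕ, x ^ n ∈ Hs ∧ h (x ^ n) = n * h x := by
    intro x hx n
    induction n with
    | zero => exact ⟨by simpa using Hs.one_mem, by simp [h1]⟩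
    | succ n ih =>
      constructor
      · rw [pow_succ]; exact Hs.mul_mem ih.1 hx
      · rw [pow_succ]
        rw [ih.1 x, ih.2]
        push_cast
        ring
  have hzpow_h : ∀ x, x ∈ Hs → ∀ n : ℤ, h (x ^ n) = n * h x := by
    intro x hx n
    cases n with
    | ofNat n => rw [Int.ofNat_eq_coe, zpow_natCast, (hpow_h x hx n).2]; push_cast; ring
    | negSucc n =>
      rw [zpow_negSucc, hneg _ (hpow_h x hx (n+1)).1, (hpow_h x hx (n+1)).2]
      push_cast
      ring
  -- case split
  by_cases hA : ∀ x ∈ Hs, h x = (0 : ℝ)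
  · -- h is bounded below, contradicting calibration
    have hbdd : ∃ B : ℝ, ∀ q : FreeGroup (Fin d) ⧸ Hs, B ≤ h ((Quotient.out q)⁻¹) := by
      have hfin : (Set.range fun q : FreeGroup (Fin d) ⧸ Hs => h ((Quotient.out q)⁻¹)).Finite :=
        Set.finite_range _
      obtain ⟨B, hB⟩ := hfin.bddBelow
      exact ⟨B, fun q => hB ⟨q, rfl⟩⟩
    obtain ⟨B, hB⟩ := hbdd
    have hval : ∀ y : FreeGroup (Fin d), B ≤ h y := by
      intro y
      set q : FreeGroup (Fin d) ⧸ Hs := QuotientGroup.mk y⁻¹ with hq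
      set r : FreeGroup (Fin d) := Quotient.out q with hr
      have hrq : QuotientGroup.mk (s := Hs) r = QuotientGroup.mk (s := Hs) y⁻¹ := by
        rw [hr, hq]
        exact Quotient.out_eq _
      have hmem : r⁻¹ * y⁻¹ ∈ Hs := QuotientGroup.eq.mp hrq
      have hmem2 : y * r ∈ Hs := by
        have := Hs.inv_mem hmem
        simpa using this
      have : h y = h (y * r) + h r⁻¹ := by
        have := hmem2 r⁻¹
        rw [show y * r * r⁻¹ = y by group] at this
        linarith
      rw [this, hA _ hmem2]
      simpa using hB q
    obtain ⟨k, hk⟩ := exists_nat_gt (-B)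
    have := hval (Y k)
    rw [hY2 k] at this
    linarith
  · push_neg at hA
    obtain ⟨a, haH, ha0⟩ := hA
    -- conjugates along calibrated points are bounded
    have hcal : ∀ k, h (Y k) = -(wordLength S (Y k) : ℝ) := by
      intro k; rw [hY1 k, hY2 k]
    set Ba : ℕ := FreeGroup.norm a + 2 * (L * (2 * L * L + 0) + L)
      + 2 * (L * (2 * L * L + 2 * wordLength S a) + L) with hBa
    set Bb : ℕ := FreeGroup.norm bb + 2 * (L * (2 * L * L + 0) + L)
      + 2 * (L * (2 * L * L + 2 * wordLength S bb) + L) with hBb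
    have hconja : ∀ k, FreeGroup.norm ((Y k)⁻¹ * a * Y k) ≤ Ba :=
      fun k => conj_bounded hS hL1 hL2 hu (hcal k) haH
    have hconjb : ∀ k, FreeGroup.norm ((Y k)⁻¹ * bb * Y k) ≤ Bb :=
      fun k => conj_bounded hS hL1 hL2 hu (hcal k) hbbH
    -- pigeonhole over the finite tree-ball
    have hball : ∀ B : ℕ, {x : FreeGroup (Fin d) | FreeGroup.norm x ≤ B}.Finite := by
      intro B
      have hlist : {l : List (Fin d × Bool) | l.length ≤ B}.Finite :=
        List.finite_length_le _ B
      refine Set.Finite.of_finite_image (f := FreeGroup.toWord) (hlist.subset ?_)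
        (FreeGroup.toWord_injective.injOn)
      rintro w ⟨x, hx, rfl⟩
      exact hx
    obtain ⟨v, _, hvinf⟩ := pigeon (Set.infinite_univ (α := ℕ))
      ((hball Ba).prod (hball Bb))
      (f := fun k => (((Y k)⁻¹ * a * Y k : FreeGroup (Fin d)), ((Y k)⁻¹ * bb * Y k : FreeGroup (Fin d))))
      (fun k _ => Set.mk_mem_prod (hconja k) (hconjb k))
    obtain ⟨k, hk, k', hk', hkk'⟩ := hvinf.nontrivial
    simp only [Set.mem_setOf_eq] at hk hk'
    have hpair := hk.2.trans hk'.2.symm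
    have hfa : (Y k)⁻¹ * a * Y k = (Y k')⁻¹ * a * Y k' := (Prod.ext_iff.mp hpair).1
    have hfb : (Y k)⁻¹ * bb * Y k = (Y k')⁻¹ * bb * Y k' := (Prod.ext_iff.mp hpair).2
    set p : FreeGroup (Fin d) := Y k with hp
    set p' : FreeGroup (Fin d) := Y k' with hp'
    set q : FreeGroup (Fin d) := p⁻¹ * p' with hq
    have hqne : q ≠ 1 := by
      intro hcon
      have hpp : p = p' := inv_mul_eq_one.mp hcon
      have hwl : wordLength S p = wordLength S p' := by rw [hpp]
      rw [hp, hp', hY1 k, hY1 k'] at hwl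
      exact hkk' hwl
    set wa : FreeGroup (Fin d) := p⁻¹ * a * p with hwa
    set wb : FreeGroup (Fin d) := p⁻¹ * bb * p with hwb
    have hwbne : wb ≠ 1 := by
      intro hcon
      apply hbbne
      have hbbeq : bb = p * wb * p⁻¹ := by rw [hwb]; group
      rw [hcon] at hbbeq
      rw [hbbeq]; group
    have hcomm_a : Commute wa q := by
      have key : q * wa * q⁻¹ = wa := by
        rw [hwa, hq]
        have : p'⁻¹ * a * p' = p⁻¹ * a * p := hfa.symm
        calc p⁻¹ * p' * (p⁻¹ * a * p) * (p⁻¹ * p')⁻¹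
            = p⁻¹ * p' * (p'⁻¹ * a * p') * (p⁻¹ * p')⁻¹ := by rw [this]
          _ = p⁻¹ * a * p := by group
      exact (mul_inv_eq_iff_eq_mul.mp key).symm
    have hcomm_b : Commute wb q := by
      have key : q * wb * q⁻¹ = wb := by
        rw [hwb, hq]
        have heqb : p'⁻¹ * bb * p' = p⁻¹ * bb * p := hfb.symm
        calc p⁻¹ * p' * (p⁻¹ * bb * p) * (p⁻¹ * p')⁻¹
            = p⁻¹ * p' * (p'⁻¹ * bb * p') * (p⁻¹ * p')⁻¹ := by rw [heqb]
          _ = p⁻¹ * bb * p := by group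
      exact (mul_inv_eq_iff_eq_mul.mp key).symm
    obtain ⟨c, ⟨i, hci⟩, ⟨j, hcj⟩⟩ := commute_cyclic hcomm_a
    obtain ⟨e, ⟨k0, hek⟩, ⟨l, hel⟩⟩ := commute_cyclic hcomm_b
    have hj0 : j ≠ 0 := by
      intro hcon
      exact hqne (by rw [hcj, hcon, zpow_zero])
    have hk00 : k0 ≠ 0 := by
      intro hcon
      exact hwbne (by rw [hek, hcon, zpow_zero])
    have hwakey : wa ^ (j * k0) = wb ^ (l * i) := by
      calc wa ^ (j * k0) = (c ^ i) ^ (j * k0) := by rw [← hci]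
        _ = c ^ (i * (j * k0)) := by rw [← zpow_mul]
        _ = c ^ (j * (i * k0)) := by rw [show i * (j * k0) = j * (i * k0) by ring]
        _ = (c ^ j) ^ (i * k0) := by rw [zpow_mul]
        _ = q ^ (i * k0) := by rw [← hcj]
        _ = (e ^ l) ^ (i * k0) := by rw [hel]
        _ = e ^ (l * (i * k0)) := by rw [← zpow_mul]
        _ = e ^ (k0 * (l * i)) := by rw [show l * (i * k0) = k0 * (l * i) by ring]
        _ = (e ^ k0) ^ (l * i) := by rw [zpow_mul]
        _ = wb ^ (l * i) := by rw [← hek]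
    have haconj : ∀ n : ℤ, a ^ n = p * wa ^ n * p⁻¹ := by
      intro n
      have h7 : a = p * wa * p⁻¹ := by rw [hwa]; group
      calc a ^ n = ((MulAut.conj p) wa) ^ n := by rw [MulAut.conj_apply, ← h7]
        _ = (MulAut.conj p) (wa ^ n) := (map_zpow _ _ _).symm
        _ = p * wa ^ n * p⁻¹ := MulAut.conj_apply _ _
    have hbconj : ∀ n : ℤ, bb ^ n = p * wb ^ n * p⁻¹ := by
      intro n
      have h7 : bb = p * wb * p⁻¹ := by rw [hwb]; group
      calc bb ^ n = ((MulAut.conj p) wb) ^ n := by rw [MulAut.conj_apply, ← h7]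
        _ = (MulAut.conj p) (wb ^ n) := (map_zpow _ _ _).symm
        _ = p * wb ^ n * p⁻¹ := MulAut.conj_apply _ _
    have hab2 : a ^ (j * k0) = bb ^ (l * i) := by
      rw [haconj, hbconj, hwakey]
    have hha := hzpow_h a haH (j * k0)
    have hhb := hzpow_h bb hbbH (l * i)
    rw [hab2, hhb, hbb0, mul_zero] at hha
    rcases mul_eq_zero.mp hha.symm with hc | hc
    · have hjk : (j * k0 : ℤ) ≠ 0 := mul_ne_zero hj0 hk00
      exact hjk (by exact_mod_cast hc)
    · exact ha0 hc
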